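/- Let n be odd and N = 2^n. There exists no unitary matrix E ∈ U(N) such that E · conj(E† X E) · E† = S⁻¹ X̄ S for every X ∈ su(N), where conj(·) and X̄ denote entrywise complex conjugation. That is, in an odd number of qubits there is no entangler intertwining the Cartan involution X ↦ X̄ with the involution θ(X) = S⁻¹ X̄ S. -/

import Mathlib

open Matrix Complex

noncomputable section

/-- Number of ones in the binary expansion of `j`. -/
def popCnt (j : ℕ) : ℕ := (Nat.digits 2 j).sum

/-- The `N × N` matrix `S = (-iσ^y) ⊗ ⋯ ⊗ (-iσ^y)` (`n` factors), `N = 2^n`;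
equivalently `S |j⟩ = (-1)^{#j} |N-1-j⟩`. -/
def Smat (n : ℕ) : Matrix (Fin (2 ^ n)) (Fin (2 ^ n)) ℂ :=
  fun k j => if (k : ℕ) + (j : ℕ) = 2 ^ n - 1 then (-1 : ℂ) ^ popCnt (j : ℕ) else 0

/-- The standard entangler `E₀` (for `n` even):
`E₀ = (1/√2) Σ_{j<N/2} ( |j⟩⟨2j| + i|j⟩⟨2j+1| + (-1)^{#j}(|N-j-1⟩⟨2j| - i|N-j-1⟩⟨2j+1|) )`. -/
def E0 (n : ℕ) : Matrix (Fin (2 ^ n)) (Fin (2 ^ n)) ℂ :=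
  fun r c =>
    (Real.sqrt 2 : ℂ)⁻¹ *
      (if (r : ℕ) < 2 ^ n / 2 then
        (if (c : ℕ) = 2 * (r : ℕ) then 1
         else if (c : ℕ) = 2 * (r : ℕ) + 1 then Complex.I else 0)
      else
        (if (c : ℕ) = 2 * (2 ^ n - 1 - (r : ℕ)) then
            (-1 : ℂ) ^ popCnt (2 ^ n - 1 - (r : ℕ))
         else if (c : ℕ) = 2 * (2 ^ n - 1 - (r : ℕ)) + 1 then
            -Complex.I * (-1 : ℂ) ^ popCnt (2 ^ n - 1 - (r : ℕ))
         else 0))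

/-- `Σ = Σ_{j<N/2} ( |j⟩⟨N/2+j| - |N/2+j⟩⟨j| )`. -/
def SigmaMat (n : ℕ) : Matrix (Fin (2 ^ n)) (Fin (2 ^ n)) ℂ :=
  fun r c =>
    if (c : ℕ) = (r : ℕ) + 2 ^ n / 2 then 1
    else if (r : ℕ) = (c : ℕ) + 2 ^ n / 2 then -1 else 0

/-- The standard finagler `F₀` (for `n` odd):
`F₀ = (1/√2) Σ_{j<N/2} ( |j⟩⟨j| + |N-j-1⟩⟨j| + (-1)^{#j}(|j⟩⟨N/2+j| - |N-j-1⟩⟨N/2+j|) )`. -/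
def F0 (n : ℕ) : Matrix (Fin (2 ^ n)) (Fin (2 ^ n)) ℂ :=
  fun r c =>
    (Real.sqrt 2 : ℂ)⁻¹ *
      (if (r : ℕ) < 2 ^ n / 2 then
        (if (c : ℕ) = (r : ℕ) then 1
         else if (c : ℕ) = (r : ℕ) + 2 ^ n / 2 then (-1 : ℂ) ^ popCnt (r : ℕ) else 0)
      else
        (if (c : ℕ) = 2 ^ n - 1 - (r : ℕ) then 1
         else if (c : ℕ) = (2 ^ n - 1 - (r : ℕ)) + 2 ^ n / 2 then
            -(-1 : ℂ) ^ popCnt (2 ^ n - 1 - (r : ℕ))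
         else 0))

/-- The concurrence capacity `κ(v) = sup { |(vψ)ᵀ S (vψ)| : ‖ψ‖ = 1, ψᵀSψ = 0 }`. -/
def kappa (n : ℕ) (v : Matrix (Fin (2 ^ n)) (Fin (2 ^ n)) ℂ) : ℝ :=
  sSup { r : ℝ | ∃ ψ : Fin (2 ^ n) → ℂ,
    star ψ ⬝ᵥ ψ = 1 ∧ ψ ⬝ᵥ ((Smat n) *ᵥ ψ) = 0 ∧
    r = ‖(v *ᵥ ψ) ⬝ᵥ ((Smat n) *ᵥ (v *ᵥ ψ))‖ }

lemma popCnt_zero : popCnt 0 = 0 := by simp [popCnt]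

lemma popCnt_two_mul (k : ℕ) (hk : 0 < k) : popCnt (2 * k) = popCnt k := by
  unfold popCnt
  rw [Nat.digits_def' (by norm_num : (1:ℕ) < 2) (by omega)]
  have h1 : 2 * k % 2 = 0 := by omega
  have h2 : 2 * k / 2 = k := by omega
  rw [h1, h2, List.sum_cons]
  omega

lemma popCnt_two_mul_add_one (k : ℕ) : popCnt (2 * k + 1) = popCnt k + 1 := by
  unfold popCnt
  rw [Nat.digits_def' (by norm_num : (1:ℕ) < 2) (by omega)]
  have h1 : (2 * k + 1) % 2 = 1 := by omega
  have h2 : (2 * k + 1) / 2 = k := by omega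
  rw [h1, h2, List.sum_cons]
  omega

lemma popCnt_compl : ∀ n : ℕ, ∀ j : ℕ, j < 2 ^ n →
    popCnt j + popCnt (2 ^ n - 1 - j) = n := by
  intro n
  induction n with
  | zero =>
    intro j hj
    interval_cases j
    simp [popCnt_zero]
  | succ n ih =>
    intro j hj
    have hN : 0 < 2 ^ n := Nat.pow_pos (by norm_num)
    have hp : (2:ℕ) ^ (n+1) = 2 * 2 ^ n := by rw [pow_succ]; ring
    rcases Nat.even_or_odd j with ⟨q, hq⟩ | ⟨q, hq⟩
    · have hj2 : j = 2 * q := by omega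
      have hql : q < 2 ^ n := by omega
      have hc : 2 ^ (n+1) - 1 - j = 2 * (2 ^ n - 1 - q) + 1 := by omega
      have := ih q hql
      rw [hj2] at hc
      rcases Nat.eq_zero_or_pos q with hq0 | hq0
      · subst hq0
        rw [hj2, hc, popCnt_two_mul_add_one]
        simpa [popCnt_zero] using this
      · rw [hj2, hc, popCnt_two_mul q hq0, popCnt_two_mul_add_one]
        omega
    · have hj2 : j = 2 * q + 1 := by omega
      have hql : q < 2 ^ n := by omega
      have hc : 2 ^ (n+1) - 1 - j = 2 * (2 ^ n - 1 - q) := by omega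
      have := ih q hql
      rw [hj2] at hc
      rcases Nat.eq_zero_or_pos (2 ^ n - 1 - q) with hq0 | hq0
      · rw [hj2, hc, popCnt_two_mul_add_one, hq0, popCnt_zero]
        rw [hq0, popCnt_zero] at this
        omega
      · rw [hj2, hc, popCnt_two_mul _ hq0, popCnt_two_mul_add_one]
        omega

lemma neg_one_pow_mul_eq {a b n : ℕ} (h : a + b = n) (hodd : Odd n) :
    (-1 : ℂ) ^ a * (-1 : ℂ) ^ b = -1 := by
  rw [← pow_add, h]
  exact hodd.neg_one_pow

lemma Smat_transpose (n : ℕ) (hodd : Odd n) : (Smat n)ᵀ = -(Smat n) := by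
  ext k j
  simp only [Matrix.transpose_apply, Matrix.neg_apply, Smat]
  by_cases h : (j : ℕ) + (k : ℕ) = 2 ^ n - 1
  · rw [if_pos h, if_pos (by omega)]
    have hs : popCnt (j : ℕ) + popCnt (k : ℕ) = n := by
      have hjlt : (j : ℕ) < 2 ^ n := j.isLt
      have hk : (k : ℕ) = 2 ^ n - 1 - (j : ℕ) := by omega
      rw [hk]; exact popCnt_compl n j hjlt
    have h1 : (-1 : ℂ) ^ popCnt (j : ℕ) * (-1 : ℂ) ^ popCnt (k : ℕ) = -1 :=
      neg_one_pow_mul_eq hs hodd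
    have h2 : (-1 : ℂ) ^ popCnt (j : ℕ) * (-1 : ℂ) ^ popCnt (j : ℕ) = 1 := by
      rw [← pow_add]
      exact Even.neg_one_pow ⟨popCnt (j : ℕ), rfl⟩
    calc (-1 : ℂ) ^ popCnt (k : ℕ)
        = ((-1 : ℂ) ^ popCnt (j : ℕ) * (-1 : ℂ) ^ popCnt (j : ℕ)) *
            (-1 : ℂ) ^ popCnt (k : ℕ) := by rw [h2, one_mul]
      _ = (-1 : ℂ) ^ popCnt (j : ℕ) *
            ((-1 : ℂ) ^ popCnt (j : ℕ) * (-1 : ℂ) ^ popCnt (k : ℕ)) := by ring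
      _ = -(-1 : ℂ) ^ popCnt (j : ℕ) := by rw [h1]; ring
  · rw [if_neg h, if_neg (by omega)]
    simp

lemma Smat_mul_Smat (n : ℕ) (hodd : Odd n) : Smat n * Smat n = -1 := by
  have hN : 0 < 2 ^ n := Nat.pow_pos (by norm_num)
  ext k j
  rw [Matrix.mul_apply]
  have hk : (k : ℕ) < 2 ^ n := k.isLt
  have hj : (j : ℕ) < 2 ^ n := j.isLt
  set l0 : Fin (2 ^ n) := ⟨2 ^ n - 1 - (k : ℕ), by omega⟩ with hl0
  have hl0v : (l0 : ℕ) = 2 ^ n - 1 - (k : ℕ) := rfl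
  rw [Finset.sum_eq_single l0]
  · by_cases hkj : k = j
    · subst hkj
      have h1 : (k : ℕ) + (l0 : ℕ) = 2 ^ n - 1 := by omega
      simp only [Smat, if_pos h1, if_pos (by omega : (l0 : ℕ) + (k : ℕ) = 2 ^ n - 1)]
      have hs : popCnt (k : ℕ) + popCnt (l0 : ℕ) = n := by
        rw [hl0v]; exact popCnt_compl n k hk
      rw [Matrix.neg_apply, Matrix.one_apply_eq]
      calc (-1 : ℂ) ^ popCnt (l0 : ℕ) * (-1 : ℂ) ^ popCnt (k : ℕ)
          = (-1 : ℂ) ^ popCnt (k : ℕ) * (-1 : ℂ) ^ popCnt (l0 : ℕ) := by ring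
        _ = -1 := neg_one_pow_mul_eq hs hodd
    · have h2 : ¬ ((l0 : ℕ) + (j : ℕ) = 2 ^ n - 1) := by
        intro hcon
        apply hkj
        apply Fin.ext
        omega
      simp only [Smat, if_neg h2, mul_zero]
      rw [Matrix.neg_apply, Matrix.one_apply_ne hkj, neg_zero]
  · intro b _ hb
    have : ¬ ((k : ℕ) + (b : ℕ) = 2 ^ n - 1) := by
      intro hcon
      apply hb
      apply Fin.ext
      omega
    simp only [Smat, if_neg this, zero_mul]
  · intro h
    exact absurd (Finset.mem_univ l0) h

lemma stdBasis_conjT {N : ℕ} (p q : Fin N) :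
    (Matrix.single p q (1 : ℂ))ᴴ = Matrix.single q p 1 := by
  ext a b
  simp only [Matrix.conjTranspose_apply, Matrix.single, Matrix.of_apply]
  by_cases h1 : p = b ∧ q = a
  · rw [if_pos h1, if_pos ⟨h1.2, h1.1⟩]; simp
  · rw [if_neg h1, if_neg (fun h => h1 ⟨h.2, h.1⟩)]; simp


/-- **No entangler exists in an odd number of qubits:** for `n` odd there is no unitary
`E ∈ U(2^n)` with `E ⋅ conj(E† X E) ⋅ E† = S⁻¹ X̄ S` for every `X ∈ su(2^n)`. -/
theorem no_entangler_odd (n : ℕ) (hn : 1 ≤ n) (hodd : Odd n) :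
    ¬ ∃ E : Matrix (Fin (2 ^ n)) (Fin (2 ^ n)) ℂ,
      E ∈ Matrix.unitaryGroup (Fin (2 ^ n)) ℂ ∧
      ∀ X : Matrix (Fin (2 ^ n)) (Fin (2 ^ n)) ℂ, Xᴴ = -X → X.trace = 0 →
        E * ((Eᴴ * X * E).map (starRingEnd ℂ)) * Eᴴ =
          (Smat n)⁻¹ * (X.map (starRingEnd ℂ)) * Smat n := by
  rintro ⟨E, hE, hcomm⟩
  have hN : 0 < 2 ^ n := Nat.pow_pos (by norm_num)
  set i0 : Fin (2 ^ n) := ⟨0, hN⟩ with hi0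
  have hSS : Smat n * Smat n = -1 := Smat_mul_Smat n hodd
  have hSinv : (Smat n)⁻¹ = -Smat n :=
    Matrix.inv_eq_right_inv (by rw [Matrix.mul_neg, hSS, neg_neg])
  have hEmem := Unitary.mem_iff.mp hE
  have hE2 : Eᴴ * E = 1 := by
    have := hEmem.1; rwa [Matrix.star_eq_conjTranspose] at this
  have hE1 : E * Eᴴ = 1 := by
    have := hEmem.2; rwa [Matrix.star_eq_conjTranspose] at this
  have hmapE : Eᴴ.map (starRingEnd ℂ) = Eᵀ := by
    ext i j
    simp [Matrix.map_apply, Matrix.conjTranspose_apply, Matrix.transpose_apply]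
  have hmapT : Eᵀ.map (starRingEnd ℂ) = Eᴴ := by
    ext i j
    simp [Matrix.map_apply, Matrix.conjTranspose_apply, Matrix.transpose_apply]
  set T : Matrix (Fin (2 ^ n)) (Fin (2 ^ n)) ℂ := E * Eᵀ with hT
  have hTc : T.map (starRingEnd ℂ) = E.map (starRingEnd ℂ) * Eᴴ := by
    rw [hT, Matrix.map_mul, hmapT]
  have hEtE : Eᵀ * E.map (starRingEnd ℂ) = 1 := by
    have h := congrArg (fun A => A.map (starRingEnd ℂ)) hE2
    simp only [Matrix.map_mul] at h
    rw [hmapE, Matrix.map_one _ (map_zero _) (map_one _)] at h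
    exact h
  have hEcE : E.map (starRingEnd ℂ) * Eᵀ = 1 := by
    have h := congrArg (fun A => A.map (starRingEnd ℂ)) hE1
    simp only [Matrix.map_mul] at h
    rw [hmapE, Matrix.map_one _ (map_zero _) (map_one _)] at h
    exact h
  have hTTc : T * T.map (starRingEnd ℂ) = 1 := by
    rw [hTc, hT, Matrix.mul_assoc, ← Matrix.mul_assoc Eᵀ, hEtE, Matrix.one_mul, hE1]
  have hTcT : T.map (starRingEnd ℂ) * T = 1 := by
    rw [hTc, hT, Matrix.mul_assoc, ← Matrix.mul_assoc Eᴴ, hE2, Matrix.one_mul, hEcE]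
  have hTsymm : Tᵀ = T := by
    rw [hT, Matrix.transpose_mul, Matrix.transpose_transpose]
  -- key commutation
  have key : ∀ Y : Matrix (Fin (2 ^ n)) (Fin (2 ^ n)) ℂ, Yᴴ = -Y → Y.trace = 0 →
      Smat n * T * Y = Y * (Smat n * T) := by
    intro Y hY htY
    have hYmm : (Y.map (starRingEnd ℂ)).map (starRingEnd ℂ) = Y := by
      ext i j; simp [Matrix.map_apply]
    have hX1 : (Y.map (starRingEnd ℂ))ᴴ = -(Y.map (starRingEnd ℂ)) := by
      ext i j
      have h := (Matrix.ext_iff.mpr hY) j i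
      rw [Matrix.conjTranspose_apply, Matrix.neg_apply] at h
      simp only [Matrix.conjTranspose_apply, Matrix.map_apply, Matrix.neg_apply,
        starRingEnd_apply, star_star]
      rw [h]
      ring
    have hX2 : (Y.map (starRingEnd ℂ)).trace = 0 := by
      have : (Y.map (starRingEnd ℂ)).trace = (starRingEnd ℂ) Y.trace := by
        simp [Matrix.trace, Matrix.diag, Matrix.map_apply, map_sum]
      rw [this, htY, map_zero]
    have h := hcomm (Y.map (starRingEnd ℂ)) hX1 hX2
    rw [hSinv, hYmm] at h
    have hmm : (Eᴴ * Y.map (starRingEnd ℂ) * E).map (starRingEnd ℂ) =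
        Eᵀ * Y * E.map (starRingEnd ℂ) := by
      rw [Matrix.map_mul, Matrix.map_mul, hmapE, hYmm]
    rw [hmm] at h
    have h2 : T * Y * T.map (starRingEnd ℂ) = -Smat n * Y * Smat n := by
      rw [hTc, hT]
      simp only [Matrix.mul_assoc] at h ⊢
      exact h
    have h3 : T * Y = -Smat n * Y * Smat n * T := by
      have h4 := congrArg (fun M => M * T) h2
      rwa [Matrix.mul_assoc (T * Y), hTcT, Matrix.mul_one] at h4
    calc Smat n * T * Y = Smat n * (T * Y) := by rw [Matrix.mul_assoc]
      _ = Smat n * (-Smat n * Y * Smat n * T) := by rw [h3]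
      _ = -(Smat n * Smat n) * Y * (Smat n * T) := by
          simp only [Matrix.neg_mul, Matrix.mul_neg, Matrix.mul_assoc]
      _ = Y * (Smat n * T) := by rw [hSS]; simp
  set M : Matrix (Fin (2 ^ n)) (Fin (2 ^ n)) ℂ := Smat n * T with hM
  -- entries of M
  have entry : ∀ p q : Fin (2 ^ n), p ≠ q → M p p = M q q ∧ M p q = 0 := by
    intro p q hpq
    have hApq : q ≠ p := Ne.symm hpq
    have hA : M * (Matrix.single p q 1 - Matrix.single q p 1) =
        (Matrix.single p q 1 - Matrix.single q p 1) * M := by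
      apply key
      · rw [Matrix.conjTranspose_sub, stdBasis_conjT, stdBasis_conjT, neg_sub]
      · rw [Matrix.trace_sub, Matrix.trace_single_eq_of_ne p q 1 hpq,
          Matrix.trace_single_eq_of_ne q p 1 hApq, sub_zero]
    have hB : M * (Complex.I • (Matrix.single p q 1 + Matrix.single q p 1)) =
        (Complex.I • (Matrix.single p q 1 + Matrix.single q p 1)) * M := by
      apply key
      · rw [Matrix.conjTranspose_smul, Matrix.conjTranspose_add, stdBasis_conjT,
          stdBasis_conjT, Complex.star_def, Complex.conj_I, add_comm, neg_smul]
      · rw [Matrix.trace_smul, Matrix.trace_add,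
          Matrix.trace_single_eq_of_ne p q 1 hpq,
          Matrix.trace_single_eq_of_ne q p 1 hApq, add_zero, smul_zero]
    constructor
    · have h1 := (Matrix.ext_iff.mpr hA) p q
      simp only [Matrix.mul_sub, Matrix.sub_mul, Matrix.sub_apply,
        Matrix.mul_single_apply_same,
        Matrix.single_mul_apply_same,
        Matrix.mul_single_apply_of_ne _ _ _ _ _ hApq,
        Matrix.mul_single_apply_of_ne _ _ _ _ _ hpq,
        Matrix.single_mul_apply_of_ne _ _ _ _ _ hpq,
        Matrix.single_mul_apply_of_ne _ _ _ _ _ hApq,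
        mul_one, one_mul, sub_zero] at h1
      exact h1
    · have h1 := (Matrix.ext_iff.mpr hA) q q
      simp only [Matrix.mul_sub, Matrix.sub_mul, Matrix.sub_apply,
        Matrix.mul_single_apply_same,
        Matrix.single_mul_apply_same,
        Matrix.mul_single_apply_of_ne _ _ _ _ _ hApq,
        Matrix.mul_single_apply_of_ne _ _ _ _ _ hpq,
        Matrix.single_mul_apply_of_ne _ _ _ _ _ hpq,
        Matrix.single_mul_apply_of_ne _ _ _ _ _ hApq,
        mul_one, one_mul, sub_zero, zero_sub] at h1
      have h2 := (Matrix.ext_iff.mpr hB) q q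
      simp only [Matrix.mul_smul, Matrix.smul_mul, Matrix.smul_apply, smul_eq_mul,
        Matrix.mul_add, Matrix.add_mul, Matrix.add_apply,
        Matrix.mul_single_apply_same,
        Matrix.single_mul_apply_same,
        Matrix.mul_single_apply_of_ne _ _ _ _ _ hApq,
        Matrix.mul_single_apply_of_ne _ _ _ _ _ hpq,
        Matrix.single_mul_apply_of_ne _ _ _ _ _ hpq,
        Matrix.single_mul_apply_of_ne _ _ _ _ _ hApq,
        mul_one, one_mul, add_zero, zero_add] at h2
      have h3 := mul_left_cancel₀ Complex.I_ne_zero h2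
      -- h1 : M q p = -(M p q), h3 : M q p = M p q
      have hsum : M p q + M p q = 0 := by
        nth_rewrite 1 [← h3]
        rw [h1]
        ring
      have h4 : (2 : ℂ) * M p q = 0 := by rw [two_mul]; exact hsum
      have h5 : (2 : ℂ) ≠ 0 := by norm_num
      exact (mul_eq_zero.mp h4).resolve_left h5
  have hscal : M = M i0 i0 • (1 : Matrix (Fin (2 ^ n)) (Fin (2 ^ n)) ℂ) := by
    ext a b
    by_cases hab : a = b
    · subst hab
      by_cases ha : a = i0
      · subst ha; simp
      · rw [(entry a i0 ha).1]
        simp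
    · rw [(entry a b hab).2]
      simp [Matrix.one_apply_ne hab]
  set c : ℂ := M i0 i0 with hc
  -- transpose gives T * S = (-c) • 1
  have hTS : T * Smat n = -(c • (1 : Matrix (Fin (2 ^ n)) (Fin (2 ^ n)) ℂ)) := by
    have h := congrArg Matrix.transpose hscal
    rw [hM] at h
    rw [Matrix.transpose_mul, hTsymm, Smat_transpose n hodd, Matrix.transpose_smul,
      Matrix.transpose_one, Matrix.mul_neg] at h
    rw [neg_eq_iff_eq_neg] at h
    exact h
  -- T*(S*T) = (T*S)*T  gives  c • T = -(c • T)
  have hcT : c • T = -(c • T) := by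
    have e1 : T * (Smat n * T) = c • T := by
      rw [← hM, hscal, Matrix.mul_smul, Matrix.mul_one]
    have e2 : T * Smat n * T = -(c • T) := by
      rw [hTS, Matrix.neg_mul, Matrix.smul_mul, Matrix.one_mul]
    have e2' : T * (Smat n * T) = -(c • T) := by rw [← Matrix.mul_assoc]; exact e2
    exact e1.symm.trans e2'
  have hfin : Smat n * T * (T.map (starRingEnd ℂ) * Smat n) = -1 := by
    rw [Matrix.mul_assoc, ← Matrix.mul_assoc T, hTTc, Matrix.one_mul, hSS]
  have hczero : c = 0 ∨ T = 0 := by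
    have h4 : (2 : ℂ) • (c • T) = 0 := by
      rw [two_smul]
      nth_rewrite 1 [hcT]
      exact neg_add_cancel _
    rw [smul_smul] at h4
    rcases smul_eq_zero.mp h4 with h | h
    · left
      have : (2 : ℂ) ≠ 0 := by norm_num
      exact (mul_eq_zero.mp h).resolve_left this
    · right; exact h
  rcases hczero with h | h
  · rw [← hM] at hfin
    rw [hscal, hc, ← hc, h, zero_smul, Matrix.zero_mul] at hfin
    have := (Matrix.ext_iff.mpr hfin) i0 i0
    simp at this
  · rw [h, Matrix.zero_mul] at hTTc
    have := (Matrix.ext_iff.mpr hTTc) i0 i0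
    simp at this
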